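/- The closed unit ball D^{n+1} ⊆ R^{n+1} is a self-dual Wulff shape: its induced spherical convex body W̃ = {(x,1)/√(‖x‖²+1) : ‖x‖ ≤ 1} satisfies W̃ = W̃°. -/

import Mathlib

open scoped RealInnerProductSpace BigOperators
open Real

namespace Sph

/-- Ambient Euclidean space `ℝ^{n+2}` containing the sphere `S^{n+1}`. -/
abbrev E (n : ℕ) := EuclideanSpace ℝ (Fin (n + 2))

/-- The unit sphere `S^{n+1} ⊂ ℝ^{n+2}`. -/
def sph (n : ℕ) : Set (E n) := {x | ‖x‖ = 1}

/-- The closed hemisphere `H(P)` centered at `P`. -/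
def hemi {n : ℕ} (P : E n) : Set (E n) := {Q | ‖Q‖ = 1 ∧ 0 ≤ ⟪P, Q⟫}

/-- The boundary `∂H(P)` of the hemisphere centered at `P`. -/
def hemiBdry {n : ℕ} (P : E n) : Set (E n) := {Q | ‖Q‖ = 1 ∧ ⟪P, Q⟫ = 0}

/-- Geodesic (angular) distance on the unit sphere. -/
noncomputable def gdist {n : ℕ} (P Q : E n) : ℝ := Real.arccos ⟪P, Q⟫

/-- Radial normalization of a vector. -/
noncomputable def nmz {n : ℕ} (x : E n) : E n := ‖x‖⁻¹ • x

/-- The geodesic arc joining `P` and `Q`. -/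
noncomputable def arc {n : ℕ} (P Q : E n) : Set (E n) :=
  {X | ∃ t ∈ Set.Icc (0 : ℝ) 1, X = nmz ((1 - t) • P + t • Q)}

/-- A subset of the sphere is hemispherical if it misses some closed hemisphere. -/
def Hemispherical {n : ℕ} (W : Set (E n)) : Prop := ∃ P ∈ sph n, W ∩ hemi P = ∅

/-- Spherical convexity: a subset of the sphere closed under geodesic arcs. -/
noncomputable def SphConvex {n : ℕ} (W : Set (E n)) : Prop :=
  W ⊆ sph n ∧ ∀ P ∈ W, ∀ Q ∈ W, arc P Q ⊆ W

/-- Interior of `W` relative to the sphere. -/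
def sphInterior {n : ℕ} (W : Set (E n)) : Set (E n) :=
  {X | X ∈ W ∧ ∃ U : Set (E n), IsOpen U ∧ X ∈ U ∧ U ∩ sph n ⊆ W}

/-- Frontier of `W` relative to the sphere. -/
def sphFrontier {n : ℕ} (W : Set (E n)) : Set (E n) :=
  closure W ∩ closure (sph n \ W)

/-- A spherical convex body: closed, hemispherical, spherically convex,
with an interior point. -/
noncomputable def SphConvexBody {n : ℕ} (W : Set (E n)) : Prop :=
  IsClosed W ∧ Hemispherical W ∧ SphConvex W ∧ (sphInterior W).Nonempty

/-- The hemisphere `H(P)` supports `W`. -/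
noncomputable def Supports {n : ℕ} (W : Set (E n)) (P : E n) : Prop :=
  P ∈ sph n ∧ W ⊆ hemi P ∧ (sphFrontier W ∩ hemiBdry P).Nonempty

/-- The width of `W` determined by the supporting hemisphere `H(P)`:
the minimum thickness `π - |PQ|` of lunes `H(P) ∩ H(Q)` over supporting
hemispheres `H(Q)` (so that `W ⊆ H(P) ∩ H(Q)`). -/
noncomputable def widthAt {n : ℕ} (W : Set (E n)) (P : E n) : ℝ :=
  sInf {d | ∃ Q, Supports W Q ∧ d = π - gdist P Q}

/-- `W` is of constant width `ρ`. -/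
noncomputable def ConstWidth {n : ℕ} (W : Set (E n)) (ρ : ℝ) : Prop :=
  ∀ P, Supports W P → widthAt W P = ρ

/-- The spherical polar set `W° = ⋂_{P ∈ W} H(P)` (as a subset of the sphere). -/
def polar {n : ℕ} (W : Set (E n)) : Set (E n) :=
  {Q | ‖Q‖ = 1 ∧ ∀ P ∈ W, 0 ≤ ⟪P, Q⟫}

/-- The diameter of `W`: the supremum of geodesic distances between its points. -/
noncomputable def diam {n : ℕ} (W : Set (E n)) : ℝ :=
  sSup {d | ∃ P ∈ W, ∃ Q ∈ W, d = gdist P Q}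

/-- The spherical convex hull: normalized nonnegative convex combinations. -/
noncomputable def sconv {n : ℕ} (W : Set (E n)) : Set (E n) :=
  {X | ∃ (k : ℕ) (t : Fin k → ℝ) (f : Fin k → E n), (∀ i, f i ∈ W) ∧
    (∀ i, 0 ≤ t i) ∧ (∑ i, t i) = 1 ∧ X = nmz (∑ i, t i • f i)}

/-- Embedding `x ↦ (x, 1)` of `ℝ^{n+1}` into `ℝ^{n+2}`. -/
noncomputable def lift {n : ℕ} (x : EuclideanSpace ℝ (Fin (n + 1))) : E n :=
  (WithLp.equiv 2 (Fin (n + 2) → ℝ)).symm (Fin.snoc (fun i => x i) 1)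

/-- The north pole `N = (0, …, 0, 1)`. -/
noncomputable def north (n : ℕ) : E n := EuclideanSpace.single (Fin.last (n + 1)) 1

end Sph

open Sph


section Aux

open Sph

/-- Front part of a vector in `E n`. -/
noncomputable def front {n : ℕ} (Q : E n) : EuclideanSpace ℝ (Fin (n + 1)) :=
  (WithLp.equiv 2 (Fin (n + 1) → ℝ)).symm (fun i => Q i.castSucc)

lemma front_apply {n : ℕ} (Q : E n) (i : Fin (n + 1)) : front Q i = Q i.castSucc := rfl

lemma inner_split {n : ℕ} (Q R : E n) :
    ⟪Q, R⟫ = ⟪front Q, front R⟫ + Q (Fin.last (n + 1)) * R (Fin.last (n + 1)) := by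
  simp only [PiLp.inner_apply, RCLike.inner_apply, conj_trivial, front_apply]
  rw [Fin.sum_univ_castSucc]
  ring

lemma lift_castSucc {n : ℕ} (x : EuclideanSpace ℝ (Fin (n + 1))) (i : Fin (n + 1)) :
    lift x i.castSucc = x i := by
  simp [lift, Fin.snoc_castSucc]

lemma lift_last {n : ℕ} (x : EuclideanSpace ℝ (Fin (n + 1))) :
    lift x (Fin.last (n + 1)) = 1 := by
  simp [lift]

lemma front_lift {n : ℕ} (x : EuclideanSpace ℝ (Fin (n + 1))) : front (lift x) = x := by
  ext i; rw [front_apply, lift_castSucc]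

lemma inner_lift {n : ℕ} (x y : EuclideanSpace ℝ (Fin (n + 1))) :
    ⟪lift x, lift y⟫ = ⟪x, y⟫ + 1 := by
  rw [inner_split, front_lift, front_lift, lift_last, lift_last, mul_one]

lemma lift_ne_zero {n : ℕ} (x : EuclideanSpace ℝ (Fin (n + 1))) : lift x ≠ 0 := by
  intro h
  have := lift_last x
  rw [h] at this
  simpa using this

lemma inner_lift_nonneg {n : ℕ} {x y : EuclideanSpace ℝ (Fin (n + 1))}
    (hx : ‖x‖ ≤ 1) (hy : ‖y‖ ≤ 1) : 0 ≤ ⟪lift x, lift y⟫ := by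
  rw [inner_lift]
  have h1 : |⟪x, y⟫| ≤ ‖x‖ * ‖y‖ := abs_real_inner_le_norm x y
  have h2 : ‖x‖ * ‖y‖ ≤ 1 := by
    calc ‖x‖ * ‖y‖ ≤ 1 * 1 := by
          apply mul_le_mul hx hy (norm_nonneg _) (by norm_num)
      _ = 1 := by norm_num
  nlinarith [abs_nonneg ⟪x, y⟫, neg_abs_le ⟪x, y⟫]

lemma norm_nmz {n : ℕ} {u : E n} (hu : u ≠ 0) : ‖nmz u‖ = 1 := by
  rw [nmz, norm_smul, norm_inv, norm_norm]
  exact inv_mul_cancel₀ (norm_ne_zero_iff.mpr hu)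

lemma inner_nmz_left {n : ℕ} (u v : E n) : ⟪nmz u, v⟫ = ‖u‖⁻¹ * ⟪u, v⟫ :=
  real_inner_smul_left _ _ _

lemma inner_nmz_right {n : ℕ} (u v : E n) : ⟪u, nmz v⟫ = ‖v‖⁻¹ * ⟪u, v⟫ :=
  real_inner_smul_right _ _ _

end Aux

theorem unit_ball_self_dual {n : ℕ} :
    {X : E n | ∃ x : EuclideanSpace ℝ (Fin (n + 1)), ‖x‖ ≤ 1 ∧ X = nmz (lift x)} =
      polar {X : E n | ∃ x : EuclideanSpace ℝ (Fin (n + 1)), ‖x‖ ≤ 1 ∧ X = nmz (lift x)} := by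
  ext Q
  constructor
  · rintro ⟨x, hx, rfl⟩
    refine ⟨norm_nmz (lift_ne_zero x), ?_⟩
    rintro P ⟨y, hy, rfl⟩
    rw [inner_nmz_left, inner_nmz_right]
    have := inner_lift_nonneg hy hx
    positivity
  · rintro ⟨hQ, hpol⟩
    -- decompose Q
    set a : ℝ := Q (Fin.last (n + 1)) with ha
    set q : EuclideanSpace ℝ (Fin (n + 1)) := front Q with hq
    have key : ∀ x : EuclideanSpace ℝ (Fin (n + 1)), ‖x‖ ≤ 1 → 0 ≤ ⟪x, q⟫ + a := by
      intro x hx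
      have h := hpol (nmz (lift x)) ⟨x, hx, rfl⟩
      rw [inner_nmz_left] at h
      have hn : 0 < ‖lift x‖ := norm_pos_iff.mpr (lift_ne_zero x)
      have h2 : 0 ≤ ⟪lift x, Q⟫ := nonneg_of_mul_nonneg_right h (by positivity)
      rw [inner_split, front_lift, lift_last, one_mul] at h2
      exact h2
    have haq : ‖q‖ ≤ a := by
      rcases eq_or_ne q 0 with h0 | h0
      · have := key 0 (by simp)
        simp only [inner_zero_left, zero_add] at this
        simpa [h0] using this
      · have hn : 0 < ‖q‖ := norm_pos_iff.mpr h0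
        have := key (-(‖q‖⁻¹ • q)) (by rw [norm_neg, norm_smul, norm_inv, norm_norm]; field_simp; norm_num)
        rw [inner_neg_left, real_inner_smul_left, real_inner_self_eq_norm_sq] at this
        have : -(‖q‖⁻¹ * ‖q‖ ^ 2) + a = -‖q‖ + a := by
          congr 1
          field_simp
        nlinarith [key (-(‖q‖⁻¹ • q)) (by rw [norm_neg, norm_smul, norm_inv, norm_norm]; field_simp; norm_num),
          real_inner_self_eq_norm_sq q]
    have hnormsq : ‖q‖ ^ 2 + a ^ 2 = 1 := by
      have : ⟪Q, Q⟫ = ‖q‖ ^ 2 + a ^ 2 := by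
        rw [inner_split, real_inner_self_eq_norm_sq]; ring
      rw [real_inner_self_eq_norm_sq, hQ] at this
      linarith [this]
    have ha0 : 0 < a := by
      rcases lt_or_ge 0 a with h | h
      · exact h
      · exfalso
        have hq0 : ‖q‖ = 0 := le_antisymm (haq.trans h) (norm_nonneg _)
        have : a = 0 := le_antisymm h (hq0 ▸ (norm_nonneg q).trans haq)
        rw [hq0, this] at hnormsq
        norm_num at hnormsq
    refine ⟨a⁻¹ • q, ?_, ?_⟩
    · rw [norm_smul, norm_inv, Real.norm_eq_abs, abs_of_pos ha0]
      rw [inv_mul_le_iff₀ ha0, mul_one]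
      exact haq
    · have hla : lift (a⁻¹ • q) = a⁻¹ • Q := by
        ext i
        rcases Fin.eq_castSucc_or_eq_last i with ⟨j, rfl⟩ | rfl
        · rw [lift_castSucc]
          simp only [PiLp.smul_apply, smul_eq_mul]
          rw [hq, front_apply]
        · rw [lift_last]
          simp only [PiLp.smul_apply, smul_eq_mul, ← ha]
          field_simp
      rw [nmz, hla, norm_smul, norm_inv, Real.norm_eq_abs, abs_of_pos ha0, hQ, mul_one,
        inv_inv, smul_smul]
      rw [mul_inv_cancel₀ (ne_of_gt ha0), one_smul]
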